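/- In the abstract stochastic gradient ascent setting, assume additionally that |J(θ)| ≤ B for all θ and that the stepsizes satisfy the Robbins–Monro conditions α_k > 0, ∑_{k=0}^∞ α_k = ∞ and ∑_{k=0}^∞ α_k² < ∞. Then ∑_{k=0}^∞ α_k ‖∇J(θ_k)‖² < ∞ almost surely. -/

import Mathlib

open MeasureTheory Filter Topology RealInnerProductSpace

lemma euclid_norm_sq {d : ℕ} (x : EuclideanSpace ℝ (Fin d)) : ‖x‖ ^ 2 = ∑ i, x i ^ 2 := by
  rw [EuclideanSpace.norm_eq]
  rw [Real.sq_sqrt (Finset.sum_nonneg fun i _ => sq_nonneg _)]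
  simp [sq_abs]

lemma euclid_abs_coord_le {d : ℕ} (x : EuclideanSpace ℝ (Fin d)) (i : Fin d) : |x i| ≤ ‖x‖ := by
  have h : x i ^ 2 ≤ ∑ j, x j ^ 2 :=
    Finset.single_le_sum (fun j _ => sq_nonneg (x j)) (Finset.mem_univ i)
  calc |x i| = Real.sqrt (x i ^ 2) := (Real.sqrt_sq_eq_abs _).symm
    _ ≤ Real.sqrt (∑ j, x j ^ 2) := Real.sqrt_le_sqrt h
    _ = ‖x‖ := by rw [← euclid_norm_sq]; exact Real.sqrt_sq (norm_nonneg x)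

lemma condexp_comp_clm_aux {α : Type*} {m m0 : MeasurableSpace α} {μ : Measure α}
    (hm : m ≤ m0) [IsFiniteMeasure μ]
    {E F : Type*} [NormedAddCommGroup E] [NormedSpace ℝ E] [CompleteSpace E]
    [NormedAddCommGroup F] [NormedSpace ℝ F] [CompleteSpace F]
    (T : E →L[ℝ] F) {f : α → E} (hf : Integrable f μ) :
    (fun ω => T (condExp m μ f ω)) =ᵐ[μ] condExp m μ (fun ω => T (f ω)) := by
  have hTf : Integrable (fun ω => T (f ω)) μ := T.integrable_comp hf
  refine ae_eq_condExp_of_forall_setIntegral_eq hm hTf ?_ ?_ ?_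
  · intro s _ _
    exact (T.integrable_comp integrable_condExp).integrableOn
  · intro s hs hμs
    rw [T.integral_comp_comm integrable_condExp.integrableOn,
        T.integral_comp_comm hf.integrableOn, setIntegral_condExp hm hf hs]
  · exact StronglyMeasurable.aestronglyMeasurable
      (T.continuous.comp_stronglyMeasurable stronglyMeasurable_condExp)

lemma taylor_bound {d : ℕ} {L : ℝ} (hL : 0 ≤ L)
    {J : EuclideanSpace ℝ (Fin d) → ℝ} (hJdiff : Differentiable ℝ J)
    (hJLip : ∀ x y, ‖gradient J x - gradient J y‖ ≤ L * ‖x - y‖)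
    (x y : EuclideanSpace ℝ (Fin d)) :
    |J y - J x - ⟪gradient J x, y - x⟫| ≤ L * ‖y - x‖ ^ 2 := by
  set φ : EuclideanSpace ℝ (Fin d) →L[ℝ] ℝ :=
    (InnerProductSpace.toDual ℝ (EuclideanSpace ℝ (Fin d))) (gradient J x) with hφ
  have hfd : ∀ z, fderiv ℝ J z
      = (InnerProductSpace.toDual ℝ (EuclideanSpace ℝ (Fin d))) (gradient J z) := by
    intro z
    exact ((hJdiff z).hasGradientAt.hasFDerivAt).fderiv
  have key : ‖J y - J x - φ (y - x)‖ ≤ (L * ‖y - x‖) * ‖y - x‖ := by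
    refine Convex.norm_image_sub_le_of_norm_fderiv_le'
      (s := Metric.closedBall x ‖y - x‖) (fun z _ => hJdiff z) ?_
      (convex_closedBall _ _) (Metric.mem_closedBall_self (norm_nonneg _)) ?_
    · intro z hz
      rw [hfd, hφ, ← map_sub]
      rw [LinearIsometryEquiv.norm_map]
      calc ‖gradient J z - gradient J x‖ ≤ L * ‖z - x‖ := hJLip z x
        _ ≤ L * ‖y - x‖ := by
            apply mul_le_mul_of_nonneg_left _ hL
            simpa [dist_eq_norm] using hz
    · simpa [Metric.mem_closedBall, dist_eq_norm] using le_refl ‖y - x‖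
  have hφapp : φ (y - x) = ⟪gradient J x, y - x⟫ := InnerProductSpace.toDual_apply_apply
  rw [hφapp] at key
  calc |J y - J x - ⟪gradient J x, y - x⟫| ≤ (L * ‖y - x‖) * ‖y - x‖ := by
        simpa [Real.norm_eq_abs] using key
    _ = L * ‖y - x‖ ^ 2 := by ring
/-- Under the Robbins–Monro stepsize conditions and boundedness of `J`,
the weighted sum `∑_k α_k ‖∇J(θ_k)‖²` is finite almost surely. -/
theorem rpg_weighted_gradient_sum_summable
    {d : ℕ} (hd : 1 ≤ d)
    {Ω : Type*} {mΩ : MeasurableSpace Ω} {μ : Measure Ω} [IsProbabilityMeasure μ]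
    (ℱ : Filtration ℕ mΩ)
    (L ℓ B : ℝ) (hL : 0 < L) (hℓ : 0 < ℓ)
    (J : EuclideanSpace ℝ (Fin d) → ℝ)
    (hJdiff : Differentiable ℝ J)
    (hJLip : ∀ x y : EuclideanSpace ℝ (Fin d),
      ‖gradient J x - gradient J y‖ ≤ L * ‖x - y‖)
    (hJbdd : ∀ x, |J x| ≤ B)
    (θ g : ℕ → Ω → EuclideanSpace ℝ (Fin d))
    (x₀ : EuclideanSpace ℝ (Fin d)) (hθ0 : θ 0 = fun _ => x₀)
    (hθadapted : Adapted ℱ θ)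
    (hgmeas : ∀ k, StronglyMeasurable[ℱ (k + 1)] (g k))
    (α : ℕ → ℝ) (hαpos : ∀ k, 0 < α k)
    (hαdiv : Tendsto (fun n => ∑ k ∈ Finset.range n, α k) atTop atTop)
    (hαsq : Summable fun k => (α k) ^ 2)
    (hupdate : ∀ k ω, θ (k + 1) ω = θ k ω + α k • g k ω)
    (hunbiased : ∀ k, μ[g k | ℱ k] =ᵐ[μ] fun ω => gradient J (θ k ω))
    (hgbdd : ∀ k, ∀ᵐ ω ∂μ, ‖g k ω‖ ≤ ℓ) :
    ∀ᵐ ω ∂μ, Summable fun k => α k * ‖gradient J (θ k ω)‖ ^ 2 := by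
  have hm : ∀ k, ℱ k ≤ mΩ := fun k => ℱ.le k
  -- measurability
  have hgradcont : Continuous (gradient J) := by
    have hlip : LipschitzWith ⟨L, hL.le⟩ (gradient J) := by
      apply LipschitzWith.of_dist_le_mul
      intro x y
      rw [dist_eq_norm, dist_eq_norm]; exact hJLip x y
    exact hlip.continuous
  have hθsm : ∀ k, StronglyMeasurable (θ k) := fun k => ((hθadapted k).mono (hm k) le_rfl).stronglyMeasurable
  have hXsm : ∀ k, StronglyMeasurable fun ω => gradient J (θ k ω) :=
    fun k => hgradcont.comp_stronglyMeasurable (hθsm k)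
  have hXsmF : ∀ k, StronglyMeasurable[ℱ k] fun ω => gradient J (θ k ω) :=
    fun k => hgradcont.comp_stronglyMeasurable (hθadapted k).stronglyMeasurable
  have hgsm : ∀ k, StronglyMeasurable (g k) := fun k => (hgmeas k).mono (hm (k + 1))
  -- integrability helper
  have intbdd : ∀ {f : Ω → ℝ} {C : ℝ}, AEStronglyMeasurable f μ →
      (∀ᵐ ω ∂μ, |f ω| ≤ C) → Integrable f μ := by
    intro f C hmf hb
    exact ⟨hmf, HasFiniteIntegral.of_bounded (C := C) (by simpa [Real.norm_eq_abs] using hb)⟩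
  have hgint : ∀ k, Integrable (g k) μ :=
    fun k => ⟨(hgsm k).aestronglyMeasurable, HasFiniteIntegral.of_bounded (hgbdd k)⟩
  -- coordinate conditional expectations
  have hcond : ∀ k (i : Fin d), condExp (ℱ k) μ (fun ω => g k ω i)
      =ᵐ[μ] fun ω => gradient J (θ k ω) i := by
    intro k i
    have h1 := condexp_comp_clm_aux (hm k) (EuclideanSpace.proj (𝕜 := ℝ) i) (hgint k)
    have h2 : (fun ω => (EuclideanSpace.proj (𝕜 := ℝ) i) (condExp (ℱ k) μ (g k) ω))
        =ᵐ[μ] fun ω => gradient J (θ k ω) i := by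
      filter_upwards [hunbiased k] with ω hω
      rw [hω]
      simp
    exact (h1.symm.trans h2 : _)
  -- coordinate bounds
  have hgbdd_i : ∀ k, ∀ᵐ ω ∂μ, ∀ i, |g k ω i| ≤ ℓ := by
    intro k
    filter_upwards [hgbdd k] with ω hω i
    exact le_trans (euclid_abs_coord_le _ i) hω
  have hXbdd_i : ∀ k, ∀ᵐ ω ∂μ, ∀ i, |gradient J (θ k ω) i| ≤ ℓ := by
    intro k
    rw [ae_all_iff]
    intro i
    have h1 : ∀ᵐ ω ∂μ, |condExp (ℱ k) μ (fun ω => g k ω i) ω| ≤ (⟨ℓ, hℓ.le⟩ : NNReal) := by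
      apply ae_bdd_condExp_of_ae_bdd
      filter_upwards [hgbdd_i k] with ω h
      exact h i
    filter_upwards [h1, hcond k i] with ω h hc
    rw [← hc]
    simpa using h
  have hXbdd : ∀ k, ∀ᵐ ω ∂μ, ‖gradient J (θ k ω)‖ ≤ Real.sqrt d * ℓ := by
    intro k
    filter_upwards [hXbdd_i k] with ω h
    have hsq : ‖gradient J (θ k ω)‖ ^ 2 ≤ (d : ℝ) * ℓ ^ 2 := by
      rw [euclid_norm_sq]
      calc ∑ i, gradient J (θ k ω) i ^ 2 ≤ ∑ _i : Fin d, ℓ ^ 2 := by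
            apply Finset.sum_le_sum
            intro i _
            have h2 : |gradient J (θ k ω) i| ^ 2 ≤ ℓ ^ 2 :=
              pow_le_pow_left₀ (abs_nonneg _) (h i) 2
            rwa [sq_abs] at h2
        _ = (d : ℝ) * ℓ ^ 2 := by simp [Finset.sum_const, mul_comm]
    calc ‖gradient J (θ k ω)‖ = Real.sqrt (‖gradient J (θ k ω)‖ ^ 2) :=
          (Real.sqrt_sq (norm_nonneg _)).symm
      _ ≤ Real.sqrt ((d : ℝ) * ℓ ^ 2) := Real.sqrt_le_sqrt hsq
      _ = Real.sqrt d * ℓ := by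
          rw [Real.sqrt_mul (by positivity), Real.sqrt_sq hℓ.le]
  -- integrability of the various integrands
  have hJi : ∀ k, Integrable (fun ω => J (θ k ω)) μ := by
    intro k
    exact intbdd (hJdiff.continuous.comp_stronglyMeasurable (hθsm k)).aestronglyMeasurable
      (Eventually.of_forall fun ω => hJbdd _)
  have hinner_sm : ∀ k, StronglyMeasurable fun ω =>
      (inner ℝ (gradient J (θ k ω)) (g k ω) : ℝ) := by
    intro k
    exact ((hXsm k).measurable.inner (hgsm k).measurable).stronglyMeasurable
  have hXgi : ∀ k, Integrable (fun ω => (inner ℝ (gradient J (θ k ω)) (g k ω) : ℝ)) μ := by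
    intro k
    apply intbdd (hinner_sm k).aestronglyMeasurable
    filter_upwards [hXbdd k, hgbdd k] with ω h1 h2
    calc |(inner ℝ (gradient J (θ k ω)) (g k ω) : ℝ)|
        ≤ ‖gradient J (θ k ω)‖ * ‖g k ω‖ := abs_real_inner_le_norm _ _
      _ ≤ (Real.sqrt d * ℓ) * ℓ := by
          apply mul_le_mul h1 h2 (norm_nonneg _) (by positivity)
  have hXsq : ∀ k, Integrable (fun ω => ‖gradient J (θ k ω)‖ ^ 2) μ := by
    intro k
    apply intbdd ((hXsm k).measurable.norm.pow_const 2).aestronglyMeasurable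
    filter_upwards [hXbdd k] with ω h1
    rw [abs_of_nonneg (by positivity)]
    calc ‖gradient J (θ k ω)‖ ^ 2 ≤ (Real.sqrt d * ℓ) ^ 2 :=
          pow_le_pow_left₀ (norm_nonneg _) h1 2
      _ = (Real.sqrt d * ℓ) ^ 2 := rfl
  -- key identity : ∫ ⟪∇J(θ k), g k⟫ = ∫ ‖∇J(θ k)‖²
  have hkey : ∀ k, ∫ ω, (inner ℝ (gradient J (θ k ω)) (g k ω) : ℝ) ∂μ
      = ∫ ω, ‖gradient J (θ k ω)‖ ^ 2 ∂μ := by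
    intro k
    have hint_terms : ∀ i : Fin d,
        Integrable (fun ω => gradient J (θ k ω) i * g k ω i) μ := by
      intro i
      apply intbdd
      · exact ((((PiLp.continuous_apply (p := 2) (β := fun _ : Fin d => ℝ) i).measurable.comp (hXsm k).measurable).mul ((PiLp.continuous_apply (p := 2) (β := fun _ : Fin d => ℝ) i).measurable.comp (hgsm k).measurable))).aestronglyMeasurable
      · filter_upwards [hXbdd_i k, hgbdd_i k] with ω h1 h2
        rw [abs_mul]
        exact mul_le_mul (h1 i) (h2 i) (abs_nonneg _) hℓ.le
    have hint_sq : ∀ i : Fin d,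
        Integrable (fun ω => gradient J (θ k ω) i ^ 2) μ := by
      intro i
      apply intbdd
      · exact (((PiLp.continuous_apply (p := 2) (β := fun _ : Fin d => ℝ) i).measurable.comp (hXsm k).measurable).pow_const 2).aestronglyMeasurable
      · filter_upwards [hXbdd_i k] with ω h1
        rw [abs_of_nonneg (sq_nonneg _), ← sq_abs]
        exact pow_le_pow_left₀ (abs_nonneg _) (h1 i) 2
    have hgi_int : ∀ i : Fin d, Integrable (fun ω => g k ω i) μ := by
      intro i
      apply intbdd (((PiLp.continuous_apply (p := 2) (β := fun _ : Fin d => ℝ) i).measurable.comp (hgsm k).measurable)).aestronglyMeasurable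
      filter_upwards [hgbdd_i k] with ω h
      exact h i
    have hterm : ∀ i : Fin d, ∫ ω, gradient J (θ k ω) i * g k ω i ∂μ
        = ∫ ω, gradient J (θ k ω) i ^ 2 ∂μ := by
      intro i
      have hXsmFi : StronglyMeasurable[ℱ k] fun ω => gradient J (θ k ω) i :=
        (PiLp.continuous_apply (p := 2) (β := fun _ : Fin d => ℝ) i).comp_stronglyMeasurable (hXsmF k)
      have hpull := condExp_mul_of_stronglyMeasurable_left (μ := μ) hXsmFi (hint_terms i) (hgi_int i)
      calc ∫ ω, gradient J (θ k ω) i * g k ω i ∂μ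
          = ∫ ω, condExp (ℱ k) μ ((fun ω => gradient J (θ k ω) i) * fun ω => g k ω i) ω ∂μ :=
            (integral_condExp (hm k)).symm
        _ = ∫ ω, gradient J (θ k ω) i * condExp (ℱ k) μ (fun ω => g k ω i) ω ∂μ := by
            apply integral_congr_ae
            filter_upwards [hpull] with ω h
            simpa using h
        _ = ∫ ω, gradient J (θ k ω) i ^ 2 ∂μ := by
            apply integral_congr_ae
            filter_upwards [hcond k i] with ω h
            rw [h, sq]
    calc ∫ ω, (inner ℝ (gradient J (θ k ω)) (g k ω) : ℝ) ∂μ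
        = ∫ ω, ∑ i, gradient J (θ k ω) i * g k ω i ∂μ := by
          apply integral_congr_ae
          apply Eventually.of_forall
          intro ω
          simp only [PiLp.inner_apply, Real.inner_apply]
      _ = ∑ i, ∫ ω, gradient J (θ k ω) i * g k ω i ∂μ :=
          integral_finset_sum _ fun i _ => hint_terms i
      _ = ∑ i, ∫ ω, gradient J (θ k ω) i ^ 2 ∂μ := Finset.sum_congr rfl fun i _ => hterm i
      _ = ∫ ω, ‖gradient J (θ k ω)‖ ^ 2 ∂μ := by
          simp_rw [euclid_norm_sq]
          exact (integral_finset_sum _ fun i _ => hint_sq i).symm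
  -- step inequality
  have hstep : ∀ k, α k * ∫ ω, ‖gradient J (θ k ω)‖ ^ 2 ∂μ
      ≤ (∫ ω, J (θ (k + 1) ω) ∂μ - ∫ ω, J (θ k ω) ∂μ) + L * ℓ ^ 2 * α k ^ 2 := by
    intro k
    have hpt : ∀ᵐ ω ∂μ, α k * (inner ℝ (gradient J (θ k ω)) (g k ω) : ℝ)
        ≤ J (θ (k + 1) ω) - J (θ k ω) + L * ℓ ^ 2 * α k ^ 2 := by
      filter_upwards [hgbdd k] with ω hg
      have ht := taylor_bound hL.le hJdiff hJLip (θ k ω) (θ (k + 1) ω)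
      have hyx : θ (k + 1) ω - θ k ω = α k • g k ω := by
        rw [hupdate k ω]; abel
      rw [hyx] at ht
      have hinn : (inner ℝ (gradient J (θ k ω)) (α k • g k ω) : ℝ)
          = α k * inner ℝ (gradient J (θ k ω)) (g k ω) := real_inner_smul_right _ _ _
      have hnrm : ‖α k • g k ω‖ ^ 2 ≤ α k ^ 2 * ℓ ^ 2 := by
        rw [norm_smul, mul_pow, Real.norm_eq_abs, sq_abs]
        apply mul_le_mul_of_nonneg_left _ (sq_nonneg _)
        exact pow_le_pow_left₀ (norm_nonneg _) hg 2
      rw [hinn] at ht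
      have h1 := (abs_le.mp ht).1
      have h2 : L * ‖α k • g k ω‖ ^ 2 ≤ L * (α k ^ 2 * ℓ ^ 2) :=
        mul_le_mul_of_nonneg_left hnrm hL.le
      nlinarith [h1, h2]
    have hlhs : Integrable (fun ω => α k * (inner ℝ (gradient J (θ k ω)) (g k ω) : ℝ)) μ :=
      (hXgi k).const_mul _
    have hrhs : Integrable
        (fun ω => J (θ (k + 1) ω) - J (θ k ω) + L * ℓ ^ 2 * α k ^ 2) μ :=
      ((hJi (k + 1)).sub (hJi k)).add (integrable_const _)
    have hmono := integral_mono_ae hlhs hrhs hpt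
    rw [integral_const_mul, hkey k] at hmono
    have hsub : Integrable (fun ω => J (θ (k + 1) ω) - J (θ k ω)) μ :=
      (hJi (k + 1)).sub (hJi k)
    have hR : ∫ ω, (J (θ (k + 1) ω) - J (θ k ω) + L * ℓ ^ 2 * α k ^ 2) ∂μ
        = (∫ ω, J (θ (k + 1) ω) ∂μ - ∫ ω, J (θ k ω) ∂μ) + L * ℓ ^ 2 * α k ^ 2 := by
      rw [integral_add hsub (integrable_const _), integral_sub (hJi (k + 1)) (hJi k),
        integral_const]
      simp [measure_univ]
    rw [hR] at hmono
    exact hmono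
  -- partial sums bounded
  have hJb : ∀ n, |∫ ω, J (θ n ω) ∂μ| ≤ B := by
    intro n
    have h := norm_integral_le_of_norm_le_const (μ := μ) (f := fun ω => J (θ n ω)) (C := B)
      (Eventually.of_forall fun ω => by simpa [Real.norm_eq_abs] using hJbdd (θ n ω))
    simpa [Real.norm_eq_abs, measure_univ] using h
  set C : ℝ := 2 * B + L * ℓ ^ 2 * (∑' k, (α k) ^ 2) with hC
  have hpartial : ∀ n, ∑ k ∈ Finset.range n,
      α k * ∫ ω, ‖gradient J (θ k ω)‖ ^ 2 ∂μ ≤ C := by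
    intro n
    have h1 : ∑ k ∈ Finset.range n, α k * ∫ ω, ‖gradient J (θ k ω)‖ ^ 2 ∂μ
        ≤ ∑ k ∈ Finset.range n,
          ((∫ ω, J (θ (k + 1) ω) ∂μ - ∫ ω, J (θ k ω) ∂μ) + L * ℓ ^ 2 * α k ^ 2) :=
      Finset.sum_le_sum fun k _ => hstep k
    rw [Finset.sum_add_distrib, Finset.sum_range_sub (fun n => ∫ ω, J (θ n ω) ∂μ),
      ← Finset.mul_sum] at h1
    have h2 : ∑ k ∈ Finset.range n, α k ^ 2 ≤ ∑' k, α k ^ 2 :=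
      Summable.sum_le_tsum _ (fun k _ => sq_nonneg _) hαsq
    have h3 : L * ℓ ^ 2 * (∑ k ∈ Finset.range n, α k ^ 2) ≤ L * ℓ ^ 2 * (∑' k, α k ^ 2) :=
      mul_le_mul_of_nonneg_left h2 (by positivity)
    have h4 := (abs_le.mp (hJb n)).2
    have h5 := (abs_le.mp (hJb 0)).1
    rw [hC]
    linarith
  have hEnn : ∀ k, 0 ≤ α k * ∫ ω, ‖gradient J (θ k ω)‖ ^ 2 ∂μ :=
    fun k => mul_nonneg (hαpos k).le (integral_nonneg fun ω => sq_nonneg _)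
  have hsumE : Summable fun k => α k * ∫ ω, ‖gradient J (θ k ω)‖ ^ 2 ∂μ :=
    summable_of_sum_range_le hEnn hpartial
  -- lintegral of the tsum is finite
  have hFmeas : ∀ k, Measurable fun ω => ENNReal.ofReal (α k * ‖gradient J (θ k ω)‖ ^ 2) :=
    fun k => (((hXsm k).measurable.norm.pow_const 2).const_mul _).ennreal_ofReal
  have hlin : ∫⁻ ω, ∑' k, ENNReal.ofReal (α k * ‖gradient J (θ k ω)‖ ^ 2) ∂μ
      = ENNReal.ofReal (∑' k, α k * ∫ ω, ‖gradient J (θ k ω)‖ ^ 2 ∂μ) := by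
    rw [lintegral_tsum fun k => (hFmeas k).aemeasurable,
      ENNReal.ofReal_tsum_of_nonneg hEnn hsumE]
    congr 1
    funext k
    rw [← ofReal_integral_eq_lintegral_ofReal ((hXsq k).const_mul _)
      (Eventually.of_forall fun ω => mul_nonneg (hαpos k).le (sq_nonneg _)),
      integral_const_mul]
  have hfin : ∫⁻ ω, ∑' k, ENNReal.ofReal (α k * ‖gradient J (θ k ω)‖ ^ 2) ∂μ ≠ ⊤ := by
    rw [hlin]; exact ENNReal.ofReal_ne_top
  have hae := ae_lt_top (Measurable.ennreal_tsum hFmeas) hfin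
  filter_upwards [hae] with ω hω
  apply summable_of_sum_range_le
    (c := (∑' k, ENNReal.ofReal (α k * ‖gradient J (θ k ω)‖ ^ 2)).toReal)
    (fun k => mul_nonneg (hαpos k).le (sq_nonneg _))
  intro n
  have hnn : ∀ k ∈ Finset.range n, 0 ≤ α k * ‖gradient J (θ k ω)‖ ^ 2 :=
    fun k _ => mul_nonneg (hαpos k).le (sq_nonneg _)
  have h1 : ENNReal.ofReal (∑ k ∈ Finset.range n, α k * ‖gradient J (θ k ω)‖ ^ 2)
      ≤ ∑' k, ENNReal.ofReal (α k * ‖gradient J (θ k ω)‖ ^ 2) := by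
    rw [ENNReal.ofReal_sum_of_nonneg hnn]
    exact ENNReal.sum_le_tsum _
  calc ∑ k ∈ Finset.range n, α k * ‖gradient J (θ k ω)‖ ^ 2
      = (ENNReal.ofReal (∑ k ∈ Finset.range n, α k * ‖gradient J (θ k ω)‖ ^ 2)).toReal :=
        (ENNReal.toReal_ofReal (Finset.sum_nonneg hnn)).symm
    _ ≤ _ := ENNReal.toReal_mono hω.ne h1
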